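/- Let q ≥ 8 be an even prime power and μ ∈ F_q^* with μ ≠ 1. Then exactly two points of the line ℓ_μ lie on tangent lines of the twisted cubic: the point spanned by (1,0,1,0), which lies on T₁, and the point spanned by (0,μ,0,1), which lies on T_s where s ∈ F_q satisfies s² = μ; no other point of ℓ_μ lies on any tangent line T_t, t ∈ F_q ∪ {∞}. -/
import Mathlib


/-- The tangent line `T_τ` of the twisted cubic, as a `2`-dimensional subspace of `F_q⁴`:
`T_t` is spanned by `(t³,t²,t,1)` and `(3t²,2t,1,0)` for `t ∈ F_q`, and `T_∞` is spanned
by `(1,0,0,0)` and `(0,1,0,0)`. -/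
noncomputable def tang {F : Type*} [Field F] : Option F → Submodule F (Fin 4 → F)
  | none => Submodule.span F {![1, 0, 0, 0], ![0, 1, 0, 0]}
  | some t => Submodule.span F {![t ^ 3, t ^ 2, t, 1], ![3 * t ^ 2, 2 * t, 1, 0]}

/-- Let `q ≥ 8` be an even prime power and `μ ∈ F_q^*`, `μ ≠ 1`. Then
exactly two points of the line `ℓ_μ` lie on tangent lines of the twisted cubic: the point
spanned by `(1,0,1,0)`, which lies on `T₁`, and the point spanned by `(0,μ,0,1)`, which
lies on `T_s` where `s² = μ`; no other point of `ℓ_μ` lies on any tangent `T_τ`,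
`τ ∈ F_q ∪ {∞}`. -/
theorem stmt11 (q : ℕ) (hq8 : 8 ≤ q) (heven : Even q)
    (F : Type*) [Field F] [Fintype F] (hcard : Fintype.card F = q)
    (μ : F) (hμ0 : μ ≠ 0) (hμ1 : μ ≠ 1) :
    let linePts : Set (Submodule F (Fin 4 → F)) :=
      {p | p = Submodule.span F {![1, 0, 1, 0]} ∨
        ∃ γ : F, p = Submodule.span F {![γ, μ, γ, 1]}}
    ∃ s : F, s ^ 2 = μ ∧
      (Submodule.span F {![1, 0, 1, 0]} : Submodule F (Fin 4 → F)) ≤ tang (some 1) ∧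
      (Submodule.span F {![0, μ, 0, 1]} : Submodule F (Fin 4 → F)) ≤ tang (some s) ∧
      (Submodule.span F {![(0 : F), μ, 0, 1]} : Submodule F (Fin 4 → F))
        ≠ Submodule.span F {![1, 0, 1, 0]} ∧
      Set.ncard {p ∈ linePts | ∃ τ : Option F, p ≤ tang τ} = 2 ∧
      ∀ p ∈ linePts, (∃ τ : Option F, p ≤ tang τ) →
        p = Submodule.span F {![1, 0, 1, 0]} ∨ p = Submodule.span F {![(0 : F), μ, 0, 1]} := by
  intro linePts
  -- characteristic two
  have h2 : (2 : F) = 0 := by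
    have hc : ringChar F = 2 := FiniteField.even_card_iff_char_two.mpr (by
      rw [hcard]; exact Nat.even_iff.mp heven)
    have : ((ringChar F : ℕ) : F) = 0 := ringChar.Nat.cast_ringChar
    rw [hc] at this
    exact_mod_cast this
  -- squaring is surjective
  have hsq : ∃ s : F, s ^ 2 = μ := by
    have hinj : Function.Injective (fun x : F => x ^ 2) := by
      intro x y hxy
      simp only at hxy
      have hz : (x - y) ^ 2 = 0 := by linear_combination hxy + (y ^ 2 - x * y) * h2
      have := pow_eq_zero_iff (n := 2) (by norm_num) |>.mp hz
      exact sub_eq_zero.mp this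
    exact (Finite.injective_iff_surjective.mp hinj) μ
  obtain ⟨s, hs⟩ := hsq
  -- membership of (1,0,1,0) in T_1
  have le1 : (Submodule.span F {![1, 0, 1, 0]} : Submodule F (Fin 4 → F)) ≤ tang (some 1) := by
    rw [Submodule.span_singleton_le_iff_mem]
    simp only [tang]
    refine Submodule.mem_span_pair.mpr ⟨0, 1, ?_⟩
    funext i
    fin_cases i <;>
      simp <;> linear_combination h2
  -- membership of (0,μ,0,1) in T_s
  have les : (Submodule.span F {![0, μ, 0, 1]} : Submodule F (Fin 4 → F)) ≤ tang (some s) := by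
    rw [Submodule.span_singleton_le_iff_mem]
    simp only [tang]
    refine Submodule.mem_span_pair.mpr ⟨1, s, ?_⟩
    funext i
    fin_cases i <;> simp
    · linear_combination 2 * s ^ 3 * h2
    · linear_combination hs + s ^ 2 * h2
    · linear_combination s * h2
  -- the two points are distinct
  have hne : (Submodule.span F {![(0 : F), μ, 0, 1]} : Submodule F (Fin 4 → F))
      ≠ Submodule.span F {![1, 0, 1, 0]} := by
    intro h
    have hmem : ![(0 : F), μ, 0, 1] ∈ Submodule.span F {![(1 : F), 0, 1, 0]} :=
      h ▸ Submodule.mem_span_singleton_self _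
    rcases Submodule.mem_span_singleton.mp hmem with ⟨c, hc⟩
    have := congrFun hc 3
    simp at this
  -- key: a non-infinity point of the line on a tangent must have γ = 0
  have key : ∀ γ : F, ∀ τ : Option F,
      Submodule.span F {![γ, μ, γ, 1]} ≤ tang τ → γ = 0 := by
    intro γ τ hle
    have hmem : ![γ, μ, γ, 1] ∈ tang τ := hle (Submodule.mem_span_singleton_self _)
    match τ with
    | none =>
      simp only [tang] at hmem
      rcases Submodule.mem_span_pair.mp hmem with ⟨a, b, h⟩
      have := congrFun h 3
      simp at this
    | some t =>
      simp only [tang] at hmem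
      rcases Submodule.mem_span_pair.mp hmem with ⟨a, b, h⟩
      have h0 := congrFun h 0
      have h1 := congrFun h 1
      have hc2 := congrFun h 2
      have hc3 := congrFun h 3
      simp at h0 h1 hc2 hc3
      have ha : a = 1 := by linear_combination hc3
      have hb : b = γ - t := by linear_combination hc2 - t * ha
      have ht2 : t ^ 2 = μ := by linear_combination h1 - t ^ 2 * ha - b * t * h2
      have hγ : γ * (μ - 1) = 0 := by
        linear_combination h0 - t ^ 3 * ha - 3 * t ^ 2 * hb -
          (γ * t ^ 2 - t ^ 3) * h2 - γ * ht2
      rcases mul_eq_zero.mp hγ with h | h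
      · exact h
      · exact absurd (sub_eq_zero.mp h) hμ1
  refine ⟨s, hs, le1, les, hne, ?_, ?_⟩
  · have hS : {p ∈ linePts | ∃ τ : Option F, p ≤ tang τ} =
        {Submodule.span F {![1, 0, 1, 0]}, Submodule.span F {![(0 : F), μ, 0, 1]}} := by
      ext p
      constructor
      · rintro ⟨hp, τ, hle⟩
        rcases hp with h | ⟨γ, rfl⟩
        · exact Or.inl h
        · right
          have := key γ τ hle
          subst this
          rfl
      · rintro (rfl | rfl)
        · exact ⟨Or.inl rfl, some 1, le1⟩
        · exact ⟨Or.inr ⟨0, rfl⟩, some s, les⟩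
    rw [hS]
    exact Set.ncard_pair hne.symm
  · rintro p hp ⟨τ, hle⟩
    rcases hp with h | ⟨γ, rfl⟩
    · exact Or.inl h
    · right
      have := key γ τ hle
      subst this
      rfl
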